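/- arXiv:0709.4347 — 2 statements merged into one kernel-verified Lean document; each statement's English description precedes it below -/
import Mathlib

section
/- Let m = (m₀,m₁,m₂) ∈ ℤ³ with m₁,m₂ ≥ 0, m₀ ≥ −1, let p ∈ ℕ, and let G₊ = {(x₁,x₂,a) ∈ G : a > 1, r(x₁,x₂,a) > 1}. Then ∫_{G₊} a^{m₀} |x₁|^{m₁} |x₂|^{m₂} e^{−p·r(x₁,x₂,a)} a⁻¹ dx₁ dx₂ da < ∞ if and only if m₁ + m₂ − 2p < −2 and m₀ + m₁ + m₂ − p < −2. -/
open Real MeasureTheory Set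
open scoped ENNReal

noncomputable section

abbrev G := ℝ × ℝ × ℝ

/-- `cosh r(x₁,x₂,a) = (a + a⁻¹ + a⁻¹(x₁²+x₂²))/2`. -/
def coshr (p : G) : ℝ := (p.2.2 + p.2.2⁻¹ + p.2.2⁻¹ * (p.1 ^ 2 + p.2.1 ^ 2)) / 2

/-- The distance from the identity: `r = arcosh (coshr)`. -/
def rG (p : G) : ℝ := Real.log (coshr p + Real.sqrt ((coshr p) ^ 2 - 1))

/-- The right Haar measure `dρ = a⁻¹ dx₁ dx₂ da` (supported on `a > 0`). -/
def ρG : Measure G :=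
  (volume : Measure G).withDensity (fun p => ENNReal.ofReal (if 0 < p.2.2 then p.2.2⁻¹ else 0))

/-- `G₊ = {(x₁,x₂,a) : a > 1, r > 1}`. -/
def Gplus : Set G := {p : G | 1 < p.2.2 ∧ 1 < rG p}

section Auxiliary

/-- 1D scaling for lintegral. -/
lemma lint_scale (f : ℝ → ℝ≥0∞) {c : ℝ} (hc : 0 < c) :
    ∫⁻ x : ℝ, f x = ENNReal.ofReal c * ∫⁻ x : ℝ, f (c * x) := by
  have hc' : c ≠ 0 := hc.ne'
  let e : ℝ ≃ᵐ ℝ := (Homeomorph.smul (Units.mk0 c hc')).toMeasurableEquiv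
  have hmap : Measure.map (fun x : ℝ => c • x) volume
      = ENNReal.ofReal |(c ^ Module.finrank ℝ ℝ)⁻¹| • volume :=
    Measure.map_addHaar_smul volume hc'
  have h1 : ∫⁻ x : ℝ, f (c * x) = ∫⁻ y, f y ∂(Measure.map (fun x : ℝ => c • x) volume) := by
    rw [show (fun x : ℝ => c • x) = e from rfl, lintegral_map_equiv]
    rfl
  rw [h1, hmap, lintegral_smul_measure, Module.finrank_self, pow_one, abs_of_nonneg
    (inv_nonneg.2 hc.le), smul_eq_mul, ← mul_assoc, ← ENNReal.ofReal_mul hc.le, mul_inv_cancel₀ hc',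
    ENNReal.ofReal_one, one_mul]

/-- model 1D integral -/
def Dint (s q : ℝ) : ℝ≥0∞ := ∫⁻ t : ℝ, ENNReal.ofReal (|t| ^ s * (1 + t ^ 2) ^ q)

lemma scale_eq (s q : ℝ) {A : ℝ} (hA : 0 < A) :
    ∫⁻ t : ℝ, ENNReal.ofReal (|t| ^ s * (A + t ^ 2) ^ q)
      = ENNReal.ofReal (A ^ ((s + 1) / 2 + q)) * Dint s q := by
  have hA2 : (0:ℝ) < Real.sqrt A := Real.sqrt_pos.2 hA
  rw [lint_scale _ hA2]
  have key : ∀ t : ℝ, ENNReal.ofReal (|Real.sqrt A * t| ^ s * (A + (Real.sqrt A * t) ^ 2) ^ q)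
      = ENNReal.ofReal (A ^ ((s + 1) / 2 + q - 1/2)) * ENNReal.ofReal (|t| ^ s * (1 + t ^ 2) ^ q) := by
    intro t
    rw [← ENNReal.ofReal_mul (by positivity)]
    congr 1
    have h1 : |Real.sqrt A * t| ^ s = A ^ (s/2) * |t| ^ s := by
      rw [abs_mul, Real.mul_rpow (abs_nonneg _) (abs_nonneg _), abs_of_nonneg hA2.le,
        Real.sqrt_eq_rpow, ← Real.rpow_mul hA.le]
      congr 1; ring
    have h2 : (A + (Real.sqrt A * t) ^ 2) ^ q = A ^ q * (1 + t ^ 2) ^ q := by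
      rw [mul_pow, Real.sq_sqrt hA.le, ← mul_one_add, Real.mul_rpow hA.le (by positivity)]
    rw [h1, h2]
    rw [show A ^ ((s + 1) / 2 + q - 1/2) = A ^ (s/2) * A ^ q by
      rw [← Real.rpow_add hA]; ring_nf]
    ring
  simp only [key]
  rw [lintegral_const_mul' _ _ ENNReal.ofReal_ne_top, ← mul_assoc,
    ← ENNReal.ofReal_mul hA2.le]
  congr 2
  rw [Real.sqrt_eq_rpow, ← Real.rpow_add hA]
  congr 1
  ring

lemma Aint_lt_top_iff {c u : ℝ} (hc : 0 < c) :
    (∫⁻ t in Set.Ioi c, ENNReal.ofReal (t ^ u)) < ⊤ ↔ u < -1 := by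
  have hmeas : Measurable fun t : ℝ => t ^ u := by fun_prop
  have hae : 0 ≤ᵐ[volume.restrict (Set.Ioi c)] fun t : ℝ => t ^ u := by
    filter_upwards [ae_restrict_mem measurableSet_Ioi] with t ht
    exact Real.rpow_nonneg (le_of_lt (hc.trans ht)) u
  rw [← hasFiniteIntegral_iff_ofReal hae]
  constructor
  · intro h
    exact (integrableOn_Ioi_rpow_iff hc).1 ⟨hmeas.aestronglyMeasurable, h⟩
  · intro h
    exact ((integrableOn_Ioi_rpow_iff hc).2 h).2

lemma Aint_pos {c u : ℝ} : 0 < ∫⁻ t in Set.Ioi c, ENNReal.ofReal (t ^ u) := by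
  have hsub : Set.Ioo (max c 0 + 1) (max c 0 + 2) ⊆ Set.Ioi c := by
    intro t ht
    have := ht.1
    have : c < t := lt_of_le_of_lt (le_max_left c 0) (by linarith)
    exact this
  calc (0:ℝ≥0∞) < ENNReal.ofReal (min ((max c 0 + 1) ^ u) ((max c 0 + 2) ^ u))
        * volume (Set.Ioo (max c 0 + 1) (max c 0 + 2)) := by
        apply ENNReal.mul_pos
        · simp only [ne_eq, ENNReal.ofReal_eq_zero, not_le, lt_min_iff]
          constructor <;> positivity
        · simp [Real.volume_Ioo]
    _ = ∫⁻ t in Set.Ioo (max c 0 + 1) (max c 0 + 2),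
          ENNReal.ofReal (min ((max c 0 + 1) ^ u) ((max c 0 + 2) ^ u)) := by
        rw [setLIntegral_const]
    _ ≤ ∫⁻ t in Set.Ioo (max c 0 + 1) (max c 0 + 2), ENNReal.ofReal (t ^ u) := by
        apply setLIntegral_mono' measurableSet_Ioo
        intro t ht
        apply ENNReal.ofReal_le_ofReal
        rcases le_or_gt u 0 with hu | hu
        · exact (min_le_right _ _).trans
            (Real.rpow_le_rpow_of_nonpos (lt_of_le_of_lt (by positivity) ht.1) ht.2.le hu)
        · exact (min_le_left _ _).trans
            (Real.rpow_le_rpow (by positivity) ht.1.le hu.le)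
    _ ≤ ∫⁻ t in Set.Ioi c, ENNReal.ofReal (t ^ u) :=
        lintegral_mono_set hsub

lemma Dint_lt_top {s q : ℝ} (hs : 0 ≤ s) (h : s + 2 * q < -1) : Dint s q < ⊤ := by
  have hq : q < 0 := by linarith
  have hr : (Module.finrank ℝ ℝ : ℝ) < -(s + 2*q) := by
    rw [Module.finrank_self]; push_cast; linarith
  have hint := integrable_one_add_norm (E := ℝ) (μ := volume) hr
  have hbound : ∀ t : ℝ, |t| ^ s * (1 + t ^ 2) ^ q
      ≤ 2 ^ (-q) * (1 + ‖t‖) ^ (-(-(s + 2*q))) := by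
    intro t
    rw [neg_neg, Real.norm_eq_abs]
    have h1 : |t| ^ s ≤ (1 + |t|) ^ s :=
      Real.rpow_le_rpow (abs_nonneg t) (by linarith [abs_nonneg t]) hs
    have h2 : (1 + t ^ 2) ^ q ≤ 2 ^ (-q) * (1 + |t|) ^ (2*q) := by
      have hb : (1 + |t|) ^ 2 / 2 ≤ 1 + t ^ 2 := by
        nlinarith [abs_nonneg t, sq_abs t, sq_nonneg (1 - |t|)]
      have := Real.rpow_le_rpow_of_nonpos (by positivity) hb hq.le
      calc (1 + t ^ 2) ^ q ≤ ((1 + |t|) ^ 2 / 2) ^ q := this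
        _ = 2 ^ (-q) * (1 + |t|) ^ (2*q) := by
            rw [Real.div_rpow (by positivity) (by norm_num),
              ← Real.rpow_natCast (1 + |t|) 2, ← Real.rpow_mul (by positivity),
              div_eq_mul_inv, ← Real.rpow_neg (by norm_num), mul_comm]
            norm_num
    calc |t| ^ s * (1 + t ^ 2) ^ q ≤ (1 + |t|) ^ s * (2 ^ (-q) * (1 + |t|) ^ (2*q)) :=
          mul_le_mul h1 h2 (by positivity) (by positivity)
      _ = 2 ^ (-q) * (1 + |t|) ^ (s + 2*q) := by
          rw [Real.rpow_add (by positivity)]; ring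
  calc Dint s q ≤ ∫⁻ t : ℝ, ENNReal.ofReal (2 ^ (-q) * (1 + ‖t‖) ^ (-(-(s + 2*q)))) :=
        lintegral_mono fun t => ENNReal.ofReal_le_ofReal (hbound t)
    _ = ENNReal.ofReal (2 ^ (-q)) * ∫⁻ t : ℝ, ENNReal.ofReal ((1 + ‖t‖) ^ (-(-(s + 2*q)))) := by
        simp_rw [ENNReal.ofReal_mul (by positivity : (0:ℝ) ≤ 2 ^ (-q))]
        exact lintegral_const_mul' _ _ ENNReal.ofReal_ne_top
    _ < ⊤ := by
        apply ENNReal.mul_lt_top ENNReal.ofReal_lt_top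
        rw [← hasFiniteIntegral_iff_ofReal (Filter.Eventually.of_forall fun t => by positivity)]
        exact hint.2

lemma Dint_eq_top {s q : ℝ} (hs : 0 ≤ s) (h : -1 ≤ s + 2 * q) : Dint s q = ⊤ := by
  have hlow : ∀ t ∈ Set.Ioi (1:ℝ), ENNReal.ofReal (min (2 ^ q) 1 * t ^ (s + 2*q))
      ≤ ENNReal.ofReal (|t| ^ s * (1 + t ^ 2) ^ q) := by
    intro t ht
    have ht1 : (1:ℝ) < t := ht
    have ht0 : (0:ℝ) < t := by linarith
    apply ENNReal.ofReal_le_ofReal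
    have habs : |t| = t := abs_of_pos ht0
    have h2 : min (2 ^ q) 1 * t ^ (2*q) ≤ (1 + t ^ 2) ^ q := by
      rcases le_or_gt q 0 with hq | hq
      · have : (1 + t ^ 2) ^ q ≥ (2 * t ^ 2) ^ q := by
          apply Real.rpow_le_rpow_of_nonpos (by positivity) (by nlinarith) hq
        calc min (2 ^ q) 1 * t ^ (2*q) ≤ 2 ^ q * t ^ (2*q) :=
              mul_le_mul_of_nonneg_right (min_le_left _ _) (by positivity)
          _ = (2 * t ^ 2) ^ q := by
              rw [Real.mul_rpow (by norm_num) (by positivity),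
                ← Real.rpow_natCast t 2, ← Real.rpow_mul ht0.le]
              norm_num
          _ ≤ (1 + t ^ 2) ^ q := this
      · calc min (2 ^ q) 1 * t ^ (2*q) ≤ 1 * t ^ (2*q) :=
              mul_le_mul_of_nonneg_right (min_le_right _ _) (by positivity)
          _ = (t ^ 2) ^ q := by
              rw [one_mul, ← Real.rpow_natCast t 2, ← Real.rpow_mul ht0.le]
              norm_num
          _ ≤ (1 + t ^ 2) ^ q :=
              Real.rpow_le_rpow (by positivity) (by linarith) hq.le
    calc min (2 ^ q) 1 * t ^ (s + 2*q) = t ^ s * (min (2 ^ q) 1 * t ^ (2*q)) := by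
          rw [Real.rpow_add ht0]; ring
      _ ≤ t ^ s * (1 + t ^ 2) ^ q := by
          apply mul_le_mul_of_nonneg_left h2 (by positivity)
      _ = |t| ^ s * (1 + t ^ 2) ^ q := by rw [habs]
  have hdiv : (∫⁻ t in Set.Ioi (1:ℝ), ENNReal.ofReal (min (2 ^ q) 1 * t ^ (s + 2*q))) = ⊤ := by
    have : ∀ t : ℝ, ENNReal.ofReal (min (2 ^ q) 1 * t ^ (s + 2*q))
        = ENNReal.ofReal (min (2 ^ q) 1) * ENNReal.ofReal (t ^ (s + 2*q)) := fun t =>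
      ENNReal.ofReal_mul (by positivity)
    simp_rw [this]
    rw [lintegral_const_mul' _ _ ENNReal.ofReal_ne_top, ENNReal.mul_eq_top]
    left
    constructor
    · simp only [ne_eq, ENNReal.ofReal_eq_zero, not_le, lt_min_iff]
      constructor <;> positivity
    · by_contra hfin
      have := (Aint_lt_top_iff (c := 1) (u := s + 2*q) one_pos).1 (lt_top_iff_ne_top.2 hfin)
      linarith
  have : (⊤ : ℝ≥0∞) ≤ Dint s q := by
    rw [← hdiv]
    calc (∫⁻ t in Set.Ioi (1:ℝ), ENNReal.ofReal (min (2 ^ q) 1 * t ^ (s + 2*q)))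
        ≤ ∫⁻ t in Set.Ioi (1:ℝ), ENNReal.ofReal (|t| ^ s * (1 + t ^ 2) ^ q) :=
          setLIntegral_mono' measurableSet_Ioi hlow
      _ ≤ Dint s q := setLIntegral_le_lintegral _ _
  exact top_le_iff.1 this

lemma Dint_pos {s q : ℝ} (hs : 0 ≤ s) : 0 < Dint s q := by
  calc (0:ℝ≥0∞) < ENNReal.ofReal (min (5 ^ q) (2 ^ q)) * volume (Set.Ioo (1:ℝ) 2) := by
        apply ENNReal.mul_pos
        · simp only [ne_eq, ENNReal.ofReal_eq_zero, not_le, lt_min_iff]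
          constructor <;> positivity
        · simp [Real.volume_Ioo]
    _ = ∫⁻ t in Set.Ioo (1:ℝ) 2, ENNReal.ofReal (min (5 ^ q) (2 ^ q)) := by
        rw [setLIntegral_const]
    _ ≤ ∫⁻ t in Set.Ioo (1:ℝ) 2, ENNReal.ofReal (|t| ^ s * (1 + t ^ 2) ^ q) := by
        apply setLIntegral_mono' measurableSet_Ioo
        intro t ht
        apply ENNReal.ofReal_le_ofReal
        have ht0 : (0:ℝ) < t := by linarith [ht.1]
        have h1 : (1:ℝ) ≤ |t| ^ s := by
          rw [abs_of_pos ht0]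
          exact Real.one_le_rpow ht.1.le hs
        have h2 : min (5 ^ q) (2 ^ q) ≤ (1 + t ^ 2) ^ q := by
          rcases le_or_gt q 0 with hq | hq
          · exact (min_le_left _ _).trans
              (Real.rpow_le_rpow_of_nonpos (by positivity) (by nlinarith [ht.1, ht.2]) hq)
          · exact (min_le_right _ _).trans
              (Real.rpow_le_rpow (by norm_num) (by nlinarith [ht.1]) hq.le)
        calc min (5 ^ q) (2 ^ q) ≤ (1 + t ^ 2) ^ q := h2
          _ ≤ |t| ^ s * (1 + t ^ 2) ^ q := le_mul_of_one_le_left (by positivity) h1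
    _ ≤ Dint s q := setLIntegral_le_lintegral _ _

lemma measurePreserving_rot : MeasurePreserving (fun w : ℝ × ℝ × ℝ => (w.2.2, w.2.1, w.1))
    (volume : Measure (ℝ × ℝ × ℝ)) (volume : Measure (ℝ × ℝ × ℝ)) := by
  have h₁ : MeasurePreserving (Prod.swap : ℝ × (ℝ × ℝ) → (ℝ × ℝ) × ℝ)
      (volume : Measure (ℝ × (ℝ × ℝ))) (volume : Measure ((ℝ × ℝ) × ℝ)) := by
    rw [Measure.volume_eq_prod, Measure.volume_eq_prod]
    exact Measure.measurePreserving_swap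
  have h₂ : MeasurePreserving (Prod.map (Prod.swap : ℝ × ℝ → ℝ × ℝ) (id : ℝ → ℝ))
      (volume : Measure ((ℝ × ℝ) × ℝ)) (volume : Measure ((ℝ × ℝ) × ℝ)) := by
    rw [Measure.volume_eq_prod]
    exact (Measure.measurePreserving_swap.prod (MeasurePreserving.id _))
  have h₃ : MeasurePreserving (MeasurableEquiv.prodAssoc : (ℝ × ℝ) × ℝ ≃ᵐ ℝ × ℝ × ℝ)
      (volume : Measure ((ℝ × ℝ) × ℝ)) (volume : Measure (ℝ × ℝ × ℝ)) :=
    volume_preserving_prodAssoc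
  have h := (h₃.comp h₂).comp h₁
  convert h using 1
  funext w; rfl

lemma H_eval (c τ s₁ s₂ q : ℝ) (hc : 0 < c) :
    ∫⁻ x : ℝ × ℝ × ℝ, ({p : ℝ × ℝ × ℝ | c < p.2.2}).indicator
        (fun x => ENNReal.ofReal ((x.2.2 ^ τ * |x.2.1| ^ s₂) *
          (|x.1| ^ s₁ * ((x.2.2 ^ 2 + x.2.1 ^ 2) + x.1 ^ 2) ^ q))) x
      = Dint s₁ q * Dint s₂ ((s₁ + 1) / 2 + q)
          * ∫⁻ a in Set.Ioi c, ENNReal.ofReal (a ^ (τ + s₁ + s₂ + 2 + 2 * q)) := by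
  set g : ℝ × ℝ × ℝ → ℝ≥0∞ := ({p : ℝ × ℝ × ℝ | c < p.2.2}).indicator
        (fun x => ENNReal.ofReal ((x.2.2 ^ τ * |x.2.1| ^ s₂) *
          (|x.1| ^ s₁ * ((x.2.2 ^ 2 + x.2.1 ^ 2) + x.1 ^ 2) ^ q))) with hg
  have hgm : Measurable g := by
    apply Measurable.indicator
    · fun_prop
    · exact measurableSet_lt measurable_const (measurable_snd.comp measurable_snd)
  have step1 : ∫⁻ x, g x = ∫⁻ w : ℝ × ℝ × ℝ, g (w.2.2, w.2.1, w.1) :=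
    (measurePreserving_rot.lintegral_comp hgm).symm
  rw [step1]
  -- Tonelli
  have step2 : ∫⁻ w : ℝ × ℝ × ℝ, g (w.2.2, w.2.1, w.1)
      = ∫⁻ a : ℝ, ∫⁻ v : ℝ × ℝ, g (v.2, v.1, a) := by
    rw [Measure.volume_eq_prod, lintegral_prod]
    exact (hgm.comp (by fun_prop)).aemeasurable
  rw [step2]
  have step3 : ∀ a : ℝ, (∫⁻ v : ℝ × ℝ, g (v.2, v.1, a))
      = ∫⁻ x₂ : ℝ, ∫⁻ x₁ : ℝ, g (x₁, x₂, a) := by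
    intro a
    rw [Measure.volume_eq_prod, lintegral_prod]
    exact (hgm.comp (by fun_prop)).aemeasurable
  simp_rw [step3]
  -- pull out the indicator in a
  have step4 : ∀ a : ℝ, (∫⁻ x₂ : ℝ, ∫⁻ x₁ : ℝ, g (x₁, x₂, a))
      = (Set.Ioi c).indicator (fun a => ∫⁻ x₂ : ℝ, ∫⁻ x₁ : ℝ,
          ENNReal.ofReal ((a ^ τ * |x₂| ^ s₂) *
            (|x₁| ^ s₁ * ((a ^ 2 + x₂ ^ 2) + x₁ ^ 2) ^ q))) a := by
    intro a
    rcases lt_or_ge c a with ha | ha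
    · rw [Set.indicator_of_mem (Set.mem_Ioi.2 ha)]
      have hz : ∀ x₂ x₁ : ℝ, g (x₁, x₂, a) = ENNReal.ofReal ((a ^ τ * |x₂| ^ s₂) *
          (|x₁| ^ s₁ * ((a ^ 2 + x₂ ^ 2) + x₁ ^ 2) ^ q)) := fun x₂ x₁ =>
        Set.indicator_of_mem (by exact ha) _
      simp_rw [hz]
    · rw [Set.indicator_of_notMem (by simpa using ha)]
      have hz : ∀ x₂ x₁ : ℝ, g (x₁, x₂, a) = 0 := fun x₂ x₁ =>
        Set.indicator_of_notMem (by simpa using ha) _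
      simp_rw [hz]
      simp
  simp_rw [step4]
  rw [lintegral_indicator measurableSet_Ioi]
  -- evaluate the inner double integral for a > c
  have inner_eval : ∀ a : ℝ, a ∈ Set.Ioi c → (∫⁻ x₂ : ℝ, ∫⁻ x₁ : ℝ,
        ENNReal.ofReal ((a ^ τ * |x₂| ^ s₂) *
          (|x₁| ^ s₁ * ((a ^ 2 + x₂ ^ 2) + x₁ ^ 2) ^ q)))
      = (Dint s₁ q * Dint s₂ ((s₁ + 1) / 2 + q))
          * ENNReal.ofReal (a ^ (τ + s₁ + s₂ + 2 + 2 * q)) := by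
    intro a ha
    have ha0 : (0:ℝ) < a := hc.trans ha
    have hx1 : ∀ x₂ : ℝ, (∫⁻ x₁ : ℝ, ENNReal.ofReal ((a ^ τ * |x₂| ^ s₂) *
          (|x₁| ^ s₁ * ((a ^ 2 + x₂ ^ 2) + x₁ ^ 2) ^ q)))
        = (Dint s₁ q * ENNReal.ofReal (a ^ τ)) *
            ENNReal.ofReal (|x₂| ^ s₂ * (a ^ 2 + x₂ ^ 2) ^ ((s₁ + 1) / 2 + q)) := by
      intro x₂
      have hA : (0:ℝ) < a ^ 2 + x₂ ^ 2 := by positivity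
      simp_rw [ENNReal.ofReal_mul (by positivity : (0:ℝ) ≤ a ^ τ * |x₂| ^ s₂)]
      rw [lintegral_const_mul' _ _ ENNReal.ofReal_ne_top, scale_eq s₁ q hA]
      rw [ENNReal.ofReal_mul (by positivity : (0:ℝ) ≤ a ^ τ),
        ENNReal.ofReal_mul (by positivity : (0:ℝ) ≤ |x₂| ^ s₂)]
      ring
    simp_rw [hx1]
    rw [lintegral_const_mul _ (by fun_prop), scale_eq s₂ _ (by positivity : (0:ℝ) < a ^ 2)]
    have hexp : (a ^ 2 : ℝ) ^ ((s₂ + 1) / 2 + ((s₁ + 1) / 2 + q))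
        = a ^ (s₁ + s₂ + 2 + 2 * q) := by
      rw [← Real.rpow_natCast a 2, ← Real.rpow_mul ha0.le]
      congr 1; push_cast; ring
    rw [hexp]
    rw [show a ^ (τ + s₁ + s₂ + 2 + 2 * q) = a ^ τ * a ^ (s₁ + s₂ + 2 + 2 * q) by
      rw [← Real.rpow_add ha0]; ring_nf]
    rw [ENNReal.ofReal_mul (by positivity : (0:ℝ) ≤ a ^ τ)]
    ring
  rw [setLIntegral_congr_fun measurableSet_Ioi
    inner_eval]
  rw [lintegral_const_mul _ (by fun_prop)]

lemma rpow_div_neg {u v : ℝ} (hu : 0 < u) (hv : 0 < v) (p : ℝ) :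
    (u / v) ^ (-p) = v ^ p * u ^ (-p) := by
  have h1 : u ^ p ≠ 0 := (Real.rpow_pos_of_pos hu p).ne'
  have h2 : v ^ p ≠ 0 := (Real.rpow_pos_of_pos hv p).ne'
  rw [Real.rpow_neg (by positivity), Real.div_rpow hu.le hv.le, Real.rpow_neg hu.le]
  field_simp

lemma coshr_eq {x : G} (ha : 0 < x.2.2) :
    coshr x = (x.2.2 ^ 2 + x.1 ^ 2 + x.2.1 ^ 2 + 1) / (2 * x.2.2) := by
  unfold coshr
  field_simp
  ring

lemma one_le_coshr {x : G} (ha : 0 < x.2.2) : 1 ≤ coshr x := by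
  rw [coshr_eq ha]
  rw [le_div_iff₀ (by positivity)]
  nlinarith [sq_nonneg (x.2.2 - 1), sq_nonneg x.1, sq_nonneg x.2.1]

lemma expE_pos {x : G} (ha : 0 < x.2.2) :
    0 < coshr x + Real.sqrt ((coshr x) ^ 2 - 1) := by
  have := one_le_coshr ha
  have := Real.sqrt_nonneg ((coshr x) ^ 2 - 1)
  linarith

lemma expE_le {x : G} (ha : 0 < x.2.2) :
    coshr x + Real.sqrt ((coshr x) ^ 2 - 1) ≤ 2 * coshr x := by
  have h1 := one_le_coshr ha
  have h2 : Real.sqrt ((coshr x) ^ 2 - 1) ≤ Real.sqrt ((coshr x) ^ 2) :=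
    Real.sqrt_le_sqrt (by nlinarith)
  rw [Real.sqrt_sq (by linarith)] at h2
  linarith

lemma exp_neg_rG {x : G} (ha : 0 < x.2.2) (y : ℝ) :
    Real.exp (y * rG x) = (coshr x + Real.sqrt ((coshr x) ^ 2 - 1)) ^ y := by
  rw [Real.rpow_def_of_pos (expE_pos ha), rG, mul_comm]

/-- upper and lower bound on `exp (-(p) * rG x)` for `1 ≤ a`. -/
lemma exp_rG_upper {x : G} (ha : 1 ≤ x.2.2) (p : ℝ) (hp : 0 ≤ p) :
    Real.exp (-p * rG x)
      ≤ 2 ^ p * (x.2.2 ^ p * (x.2.2 ^ 2 + x.1 ^ 2 + x.2.1 ^ 2) ^ (-p)) := by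
  have ha0 : (0:ℝ) < x.2.2 := lt_of_lt_of_le one_pos ha
  set Q : ℝ := x.2.2 ^ 2 + x.1 ^ 2 + x.2.1 ^ 2 with hQ
  have hQ0 : 0 < Q := by positivity
  have hE : Q / (2 * x.2.2) ≤ coshr x + Real.sqrt ((coshr x) ^ 2 - 1) := by
    have : Q / (2 * x.2.2) ≤ coshr x := by
      rw [coshr_eq ha0]
      apply div_le_div_of_nonneg_right ?_ (by positivity)
      linarith
    linarith [Real.sqrt_nonneg ((coshr x) ^ 2 - 1)]
  rw [exp_neg_rG ha0]
  calc (coshr x + Real.sqrt ((coshr x) ^ 2 - 1)) ^ (-p) ≤ (Q / (2 * x.2.2)) ^ (-p) :=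
        Real.rpow_le_rpow_of_nonpos (by positivity) hE (neg_nonpos.2 hp)
    _ = 2 ^ p * (x.2.2 ^ p * Q ^ (-p)) := by
        rw [rpow_div_neg hQ0 (by positivity), Real.mul_rpow (by norm_num) ha0.le]
        ring

lemma exp_rG_lower {x : G} (ha : 1 ≤ x.2.2) (p : ℝ) (hp : 0 ≤ p) :
    2 ^ (-p) * (x.2.2 ^ p * (x.2.2 ^ 2 + x.1 ^ 2 + x.2.1 ^ 2) ^ (-p))
      ≤ Real.exp (-p * rG x) := by
  have ha0 : (0:ℝ) < x.2.2 := lt_of_lt_of_le one_pos ha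
  set Q : ℝ := x.2.2 ^ 2 + x.1 ^ 2 + x.2.1 ^ 2 with hQ
  have hQ0 : 0 < Q := by positivity
  have hQ1 : 1 ≤ Q := by nlinarith
  have hE : coshr x + Real.sqrt ((coshr x) ^ 2 - 1) ≤ 2 * Q / x.2.2 := by
    have h1 : coshr x ≤ Q / x.2.2 := by
      rw [coshr_eq ha0, div_le_div_iff₀ (by positivity) ha0]
      nlinarith
    have := expE_le ha0
    calc coshr x + Real.sqrt ((coshr x) ^ 2 - 1) ≤ 2 * coshr x := this
      _ ≤ 2 * (Q / x.2.2) := by linarith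
      _ = 2 * Q / x.2.2 := by ring
  rw [exp_neg_rG ha0]
  calc 2 ^ (-p) * (x.2.2 ^ p * Q ^ (-p)) = (2 * Q / x.2.2) ^ (-p) := by
        rw [rpow_div_neg (by positivity) ha0, Real.mul_rpow (by norm_num) hQ0.le]
        ring
    _ ≤ (coshr x + Real.sqrt ((coshr x) ^ 2 - 1)) ^ (-p) :=
        Real.rpow_le_rpow_of_nonpos (expE_pos ha0) hE (neg_nonpos.2 hp)

lemma mem_Gplus_of {x : G} (ha : 4 < x.2.2) : x ∈ Gplus := by
  have ha0 : (0:ℝ) < x.2.2 := by linarith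
  have h2 : 2 ≤ coshr x := by
    rw [coshr_eq ha0, le_div_iff₀ (by positivity)]
    nlinarith [sq_nonneg x.1, sq_nonneg x.2.1]
  refine ⟨by linarith, ?_⟩
  rw [rG]
  rw [Real.lt_log_iff_exp_lt (expE_pos ha0)]
  have hsqrt : Real.sqrt 3 ≤ Real.sqrt ((coshr x) ^ 2 - 1) :=
    Real.sqrt_le_sqrt (by nlinarith)
  have h3 : (1.7:ℝ) < Real.sqrt 3 := by
    have h4 : (1.7:ℝ) = Real.sqrt (1.7 ^ 2) := (Real.sqrt_sq (by norm_num)).symm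
    rw [h4]
    exact Real.sqrt_lt_sqrt (by positivity) (by norm_num)
  have := Real.exp_one_lt_d9
  nlinarith
end Auxiliary

section MainLemmas

lemma measurable_rG : Measurable rG := by
  unfold rG coshr
  apply Real.measurable_log.comp
  apply Measurable.add
  · fun_prop
  · exact (Real.continuous_sqrt.measurable).comp (by fun_prop)

lemma measurableSet_Gplus : MeasurableSet Gplus := by
  have h1 : MeasurableSet {p : G | 1 < p.2.2} :=
    measurableSet_lt measurable_const (measurable_snd.comp measurable_snd)
  have h2 : MeasurableSet {p : G | 1 < rG p} :=
    measurableSet_lt measurable_const measurable_rG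
  exact h1.inter h2

lemma real_upper {x : G} (ha : 1 < x.2.2) (m₀ m₁ m₂ : ℤ) (p : ℕ) :
    x.2.2⁻¹ * (x.2.2 ^ m₀ * |x.1| ^ m₁ * |x.2.1| ^ m₂ * Real.exp (-(p : ℝ) * rG x))
      ≤ 2 ^ (p : ℝ) * ((x.2.2 ^ ((m₀ : ℝ) - 1 + p) * |x.2.1| ^ (m₂ : ℝ)) *
        (|x.1| ^ (m₁ : ℝ) * ((x.2.2 ^ 2 + x.2.1 ^ 2) + x.1 ^ 2) ^ (-(p : ℝ)))) := by
  have ha0 : (0:ℝ) < x.2.2 := lt_trans one_pos ha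
  have hQ : ((x.2.2 ^ 2 + x.2.1 ^ 2) + x.1 ^ 2 : ℝ) = x.2.2 ^ 2 + x.1 ^ 2 + x.2.1 ^ 2 := by ring
  rw [hQ]
  have hE := exp_rG_upper ha.le (p : ℝ) (by positivity)
  calc x.2.2⁻¹ * (x.2.2 ^ m₀ * |x.1| ^ m₁ * |x.2.1| ^ m₂ * Real.exp (-(p : ℝ) * rG x))
      = (x.2.2 ^ ((m₀ : ℝ) - 1) * |x.1| ^ (m₁ : ℝ) * |x.2.1| ^ (m₂ : ℝ))
          * Real.exp (-(p : ℝ) * rG x) := by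
        rw [← Real.rpow_intCast x.2.2 m₀, ← Real.rpow_intCast |x.1| m₁,
          ← Real.rpow_intCast |x.2.1| m₂, Real.rpow_sub ha0, Real.rpow_one]
        ring
    _ ≤ (x.2.2 ^ ((m₀ : ℝ) - 1) * |x.1| ^ (m₁ : ℝ) * |x.2.1| ^ (m₂ : ℝ))
          * (2 ^ (p : ℝ) * (x.2.2 ^ (p : ℝ) *
            (x.2.2 ^ 2 + x.1 ^ 2 + x.2.1 ^ 2) ^ (-(p : ℝ)))) :=
        mul_le_mul_of_nonneg_left hE (by positivity)
    _ = 2 ^ (p : ℝ) * ((x.2.2 ^ ((m₀ : ℝ) - 1 + p) * |x.2.1| ^ (m₂ : ℝ)) *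
        (|x.1| ^ (m₁ : ℝ) * (x.2.2 ^ 2 + x.1 ^ 2 + x.2.1 ^ 2) ^ (-(p : ℝ)))) := by
        rw [Real.rpow_add ha0 ((m₀ : ℝ) - 1) (p : ℝ)]
        ring

lemma real_lower {x : G} (ha : 1 < x.2.2) (m₀ m₁ m₂ : ℤ) (p : ℕ) :
    2 ^ (-(p : ℝ)) * ((x.2.2 ^ ((m₀ : ℝ) - 1 + p) * |x.2.1| ^ (m₂ : ℝ)) *
        (|x.1| ^ (m₁ : ℝ) * ((x.2.2 ^ 2 + x.2.1 ^ 2) + x.1 ^ 2) ^ (-(p : ℝ))))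
      ≤ x.2.2⁻¹ * (x.2.2 ^ m₀ * |x.1| ^ m₁ * |x.2.1| ^ m₂ * Real.exp (-(p : ℝ) * rG x)) := by
  have ha0 : (0:ℝ) < x.2.2 := lt_trans one_pos ha
  have hQ : ((x.2.2 ^ 2 + x.2.1 ^ 2) + x.1 ^ 2 : ℝ) = x.2.2 ^ 2 + x.1 ^ 2 + x.2.1 ^ 2 := by ring
  rw [hQ]
  have hE := exp_rG_lower ha.le (p : ℝ) (by positivity)
  calc 2 ^ (-(p : ℝ)) * ((x.2.2 ^ ((m₀ : ℝ) - 1 + p) * |x.2.1| ^ (m₂ : ℝ)) *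
        (|x.1| ^ (m₁ : ℝ) * (x.2.2 ^ 2 + x.1 ^ 2 + x.2.1 ^ 2) ^ (-(p : ℝ))))
      = (x.2.2 ^ ((m₀ : ℝ) - 1) * |x.1| ^ (m₁ : ℝ) * |x.2.1| ^ (m₂ : ℝ))
          * (2 ^ (-(p : ℝ)) * (x.2.2 ^ (p : ℝ) *
            (x.2.2 ^ 2 + x.1 ^ 2 + x.2.1 ^ 2) ^ (-(p : ℝ)))) := by
        rw [Real.rpow_add ha0 ((m₀ : ℝ) - 1) (p : ℝ)]
        ring
    _ ≤ (x.2.2 ^ ((m₀ : ℝ) - 1) * |x.1| ^ (m₁ : ℝ) * |x.2.1| ^ (m₂ : ℝ))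
          * Real.exp (-(p : ℝ) * rG x) :=
        mul_le_mul_of_nonneg_left hE (by positivity)
    _ = x.2.2⁻¹ * (x.2.2 ^ m₀ * |x.1| ^ m₁ * |x.2.1| ^ m₂ * Real.exp (-(p : ℝ) * rG x)) := by
        rw [← Real.rpow_intCast x.2.2 m₀, ← Real.rpow_intCast |x.1| m₁,
          ← Real.rpow_intCast |x.2.1| m₂, Real.rpow_sub ha0, Real.rpow_one]
        ring

end MainLemmas

/-- Lemma 2.2 (i): for `m = (m₀,m₁,m₂) ∈ ℤ³` with `m₁,m₂ ≥ 0`, `m₀ ≥ -1`, and `p ∈ ℕ`,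
the function `x^m e^{-p r}` is integrable on `G₊` with respect to `ρ` iff
`m₁ + m₂ - 2p < -2` and `m₀ + m₁ + m₂ - p < -2`. -/
theorem integrability_on_Gplus (m₀ m₁ m₂ : ℤ) (hm₁ : 0 ≤ m₁) (hm₂ : 0 ≤ m₂) (hm₀ : -1 ≤ m₀)
    (p : ℕ) :
    (∫⁻ x in Gplus, ENNReal.ofReal
        (x.2.2 ^ m₀ * |x.1| ^ m₁ * |x.2.1| ^ m₂ * Real.exp (-(p : ℝ) * rG x)) ∂ρG) < ⊤ ↔
      (m₁ + m₂ - 2 * (p : ℤ) < -2 ∧ m₀ + m₁ + m₂ - (p : ℤ) < -2) := by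
  have hs₁0 : (0:ℝ) ≤ (m₁ : ℝ) := by exact_mod_cast hm₁
  have hs₂0 : (0:ℝ) ≤ (m₂ : ℝ) := by exact_mod_cast hm₂
  have hw : Measurable fun x : G => ENNReal.ofReal (if 0 < x.2.2 then x.2.2⁻¹ else 0) := by
    apply Measurable.ennreal_ofReal
    apply Measurable.ite _ (by fun_prop) measurable_const
    exact measurableSet_lt measurable_const (measurable_snd.comp measurable_snd)
  have hB : Measurable fun x : G =>
      ENNReal.ofReal (x.2.2 ^ m₀ * |x.1| ^ m₁ * |x.2.1| ^ m₂ * Real.exp (-(p : ℝ) * rG x)) := by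
    have := measurable_rG
    fun_prop
  have key : (∫⁻ x in Gplus, ENNReal.ofReal
        (x.2.2 ^ m₀ * |x.1| ^ m₁ * |x.2.1| ^ m₂ * Real.exp (-(p : ℝ) * rG x)) ∂ρG)
      = ∫⁻ x, Gplus.indicator (fun x =>
          ENNReal.ofReal (if 0 < x.2.2 then x.2.2⁻¹ else 0) *
          ENNReal.ofReal (x.2.2 ^ m₀ * |x.1| ^ m₁ * |x.2.1| ^ m₂ *
            Real.exp (-(p : ℝ) * rG x))) x := by
    rw [ρG, setLIntegral_withDensity_eq_setLIntegral_mul volume hw hB measurableSet_Gplus,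
      ← lintegral_indicator measurableSet_Gplus]
    rfl
  -- upper bound
  have hupper : ∀ x : G, Gplus.indicator (fun x =>
          ENNReal.ofReal (if 0 < x.2.2 then x.2.2⁻¹ else 0) *
          ENNReal.ofReal (x.2.2 ^ m₀ * |x.1| ^ m₁ * |x.2.1| ^ m₂ *
            Real.exp (-(p : ℝ) * rG x))) x
      ≤ ({y : G | 1 < y.2.2}).indicator (fun x => ENNReal.ofReal (2 ^ (p : ℝ)) *
          ENNReal.ofReal ((x.2.2 ^ ((m₀ : ℝ) - 1 + p) * |x.2.1| ^ (m₂ : ℝ)) *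
            (|x.1| ^ (m₁ : ℝ) * ((x.2.2 ^ 2 + x.2.1 ^ 2) + x.1 ^ 2) ^ (-(p : ℝ))))) x := by
    intro x
    by_cases hx : x ∈ Gplus
    · rw [Set.indicator_of_mem hx, Set.indicator_of_mem (show x ∈ {y : G | 1 < y.2.2} from hx.1)]
      have ha1 : 1 < x.2.2 := hx.1
      have ha0 : (0:ℝ) < x.2.2 := lt_trans one_pos ha1
      rw [if_pos ha0, ← ENNReal.ofReal_mul (inv_nonneg.2 ha0.le),
        ← ENNReal.ofReal_mul (by positivity)]
      exact ENNReal.ofReal_le_ofReal (real_upper ha1 m₀ m₁ m₂ p)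
    · rw [Set.indicator_of_notMem hx]
      exact zero_le
  have hIub : (∫⁻ x in Gplus, ENNReal.ofReal
        (x.2.2 ^ m₀ * |x.1| ^ m₁ * |x.2.1| ^ m₂ * Real.exp (-(p : ℝ) * rG x)) ∂ρG)
      ≤ ENNReal.ofReal (2 ^ (p : ℝ)) * (Dint (m₁ : ℝ) (-(p : ℝ))
          * Dint (m₂ : ℝ) (((m₁ : ℝ) + 1) / 2 + (-(p : ℝ)))
          * ∫⁻ a in Set.Ioi (1:ℝ), ENNReal.ofReal
              (a ^ (((m₀ : ℝ) - 1 + p) + (m₁ : ℝ) + (m₂ : ℝ) + 2 + 2 * (-(p : ℝ))))) := by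
    rw [key]
    calc _ ≤ ∫⁻ x : G, ({y : G | 1 < y.2.2}).indicator (fun x => ENNReal.ofReal (2 ^ (p : ℝ)) *
          ENNReal.ofReal ((x.2.2 ^ ((m₀ : ℝ) - 1 + p) * |x.2.1| ^ (m₂ : ℝ)) *
            (|x.1| ^ (m₁ : ℝ) * ((x.2.2 ^ 2 + x.2.1 ^ 2) + x.1 ^ 2) ^ (-(p : ℝ))))) x :=
        lintegral_mono hupper
      _ = ENNReal.ofReal (2 ^ (p : ℝ)) * ∫⁻ x : G, ({y : G | 1 < y.2.2}).indicator (fun x =>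
          ENNReal.ofReal ((x.2.2 ^ ((m₀ : ℝ) - 1 + p) * |x.2.1| ^ (m₂ : ℝ)) *
            (|x.1| ^ (m₁ : ℝ) * ((x.2.2 ^ 2 + x.2.1 ^ 2) + x.1 ^ 2) ^ (-(p : ℝ))))) x := by
          simp_rw [Set.indicator_const_mul]
          exact lintegral_const_mul' _ _ ENNReal.ofReal_ne_top
      _ = _ := by rw [H_eval 1 ((m₀ : ℝ) - 1 + p) (m₁ : ℝ) (m₂ : ℝ) (-(p : ℝ)) one_pos]
  -- lower bound
  have hlower : ∀ x : G, ({y : G | 4 < y.2.2}).indicator (fun x => ENNReal.ofReal (2 ^ (-(p : ℝ))) *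
          ENNReal.ofReal ((x.2.2 ^ ((m₀ : ℝ) - 1 + p) * |x.2.1| ^ (m₂ : ℝ)) *
            (|x.1| ^ (m₁ : ℝ) * ((x.2.2 ^ 2 + x.2.1 ^ 2) + x.1 ^ 2) ^ (-(p : ℝ))))) x
      ≤ Gplus.indicator (fun x =>
          ENNReal.ofReal (if 0 < x.2.2 then x.2.2⁻¹ else 0) *
          ENNReal.ofReal (x.2.2 ^ m₀ * |x.1| ^ m₁ * |x.2.1| ^ m₂ *
            Real.exp (-(p : ℝ) * rG x))) x := by
    intro x
    by_cases hx : x ∈ {y : G | 4 < y.2.2}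
    · have hmem : x ∈ Gplus := mem_Gplus_of hx
      rw [Set.indicator_of_mem hx, Set.indicator_of_mem hmem]
      have ha1 : 1 < x.2.2 := hmem.1
      have ha0 : (0:ℝ) < x.2.2 := lt_trans one_pos ha1
      rw [if_pos ha0, ← ENNReal.ofReal_mul (inv_nonneg.2 ha0.le),
        ← ENNReal.ofReal_mul (by positivity)]
      exact ENNReal.ofReal_le_ofReal (real_lower ha1 m₀ m₁ m₂ p)
    · rw [Set.indicator_of_notMem hx]
      exact zero_le
  have hIlb : ENNReal.ofReal (2 ^ (-(p : ℝ))) * (Dint (m₁ : ℝ) (-(p : ℝ))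
          * Dint (m₂ : ℝ) (((m₁ : ℝ) + 1) / 2 + (-(p : ℝ)))
          * ∫⁻ a in Set.Ioi (4:ℝ), ENNReal.ofReal
              (a ^ (((m₀ : ℝ) - 1 + p) + (m₁ : ℝ) + (m₂ : ℝ) + 2 + 2 * (-(p : ℝ)))))
      ≤ (∫⁻ x in Gplus, ENNReal.ofReal
        (x.2.2 ^ m₀ * |x.1| ^ m₁ * |x.2.1| ^ m₂ * Real.exp (-(p : ℝ) * rG x)) ∂ρG) := by
    rw [key]
    calc ENNReal.ofReal (2 ^ (-(p : ℝ))) * (Dint (m₁ : ℝ) (-(p : ℝ))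
          * Dint (m₂ : ℝ) (((m₁ : ℝ) + 1) / 2 + (-(p : ℝ)))
          * ∫⁻ a in Set.Ioi (4:ℝ), ENNReal.ofReal
              (a ^ (((m₀ : ℝ) - 1 + p) + (m₁ : ℝ) + (m₂ : ℝ) + 2 + 2 * (-(p : ℝ)))))
        = ∫⁻ x : G, ({y : G | 4 < y.2.2}).indicator (fun x => ENNReal.ofReal (2 ^ (-(p : ℝ))) *
          ENNReal.ofReal ((x.2.2 ^ ((m₀ : ℝ) - 1 + p) * |x.2.1| ^ (m₂ : ℝ)) *
            (|x.1| ^ (m₁ : ℝ) * ((x.2.2 ^ 2 + x.2.1 ^ 2) + x.1 ^ 2) ^ (-(p : ℝ))))) x := by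
          rw [← H_eval 4 ((m₀ : ℝ) - 1 + p) (m₁ : ℝ) (m₂ : ℝ) (-(p : ℝ)) (by norm_num)]
          simp_rw [Set.indicator_const_mul]
          exact (lintegral_const_mul' _ _ ENNReal.ofReal_ne_top).symm
      _ ≤ _ := lintegral_mono hlower
  constructor
  · -- finiteness implies the exponent conditions
    intro hfin
    by_contra hcon
    rw [not_and_or] at hcon
    have htop : ENNReal.ofReal (2 ^ (-(p : ℝ))) * (Dint (m₁ : ℝ) (-(p : ℝ))
          * Dint (m₂ : ℝ) (((m₁ : ℝ) + 1) / 2 + (-(p : ℝ)))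
          * ∫⁻ a in Set.Ioi (4:ℝ), ENNReal.ofReal
              (a ^ (((m₀ : ℝ) - 1 + p) + (m₁ : ℝ) + (m₂ : ℝ) + 2 + 2 * (-(p : ℝ))))) = ⊤ := by
      have hc0 : ENNReal.ofReal (2 ^ (-(p : ℝ))) ≠ 0 := by
        simp only [ne_eq, ENNReal.ofReal_eq_zero, not_le]
        positivity
      have hD1pos : Dint (m₁ : ℝ) (-(p : ℝ)) ≠ 0 := (Dint_pos hs₁0).ne'
      have hD2pos : Dint (m₂ : ℝ) (((m₁ : ℝ) + 1) / 2 + (-(p : ℝ))) ≠ 0 := (Dint_pos hs₂0).ne'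
      have hApos : (∫⁻ a in Set.Ioi (4:ℝ), ENNReal.ofReal
          (a ^ (((m₀ : ℝ) - 1 + p) + (m₁ : ℝ) + (m₂ : ℝ) + 2 + 2 * (-(p : ℝ))))) ≠ 0 :=
        Aint_pos.ne'
      rcases hcon with hA | hB'
      · -- m₁ + m₂ - 2p ≥ -2 : D₂ is infinite
        push_neg at hA
        have hAr : (-2:ℝ) ≤ (m₁ : ℝ) + (m₂ : ℝ) - 2 * (p : ℝ) := by exact_mod_cast hA
        have hD2top : Dint (m₂ : ℝ) (((m₁ : ℝ) + 1) / 2 + (-(p : ℝ))) = ⊤ :=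
          Dint_eq_top hs₂0 (by push_cast; linarith)
        rw [hD2top, ENNReal.mul_top hD1pos, ENNReal.top_mul hApos, ENNReal.mul_top hc0]
      · -- m₀ + m₁ + m₂ - p ≥ -2 : the a-integral is infinite
        push_neg at hB'
        have hBr : (-2:ℝ) ≤ (m₀ : ℝ) + (m₁ : ℝ) + (m₂ : ℝ) - (p : ℝ) := by exact_mod_cast hB'
        have hAtop : (∫⁻ a in Set.Ioi (4:ℝ), ENNReal.ofReal
            (a ^ (((m₀ : ℝ) - 1 + p) + (m₁ : ℝ) + (m₂ : ℝ) + 2 + 2 * (-(p : ℝ))))) = ⊤ := by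
          by_contra hne
          have := (Aint_lt_top_iff (by norm_num : (0:ℝ) < 4)).1 (lt_top_iff_ne_top.2 hne)
          linarith
        rw [hAtop, ENNReal.mul_top (mul_ne_zero hD1pos hD2pos), ENNReal.mul_top hc0]
    rw [htop] at hIlb
    exact absurd (lt_of_le_of_lt hIlb hfin) (lt_irrefl ⊤)
  · -- the exponent conditions imply finiteness
    rintro ⟨hA, hB'⟩
    have hAr : (m₁ : ℝ) + (m₂ : ℝ) - 2 * (p : ℝ) < -2 := by exact_mod_cast hA
    have hBr : (m₀ : ℝ) + (m₁ : ℝ) + (m₂ : ℝ) - (p : ℝ) < -2 := by exact_mod_cast hB'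
    refine lt_of_le_of_lt hIub ?_
    apply ENNReal.mul_lt_top ENNReal.ofReal_lt_top
    apply ENNReal.mul_lt_top
    · apply ENNReal.mul_lt_top
      · exact Dint_lt_top hs₁0 (by linarith)
      · exact Dint_lt_top hs₂0 (by push_cast; linarith)
    · exact (Aint_lt_top_iff one_pos).2 (by linarith)
end
end

section
/- For any A > 1 and B'' > 1, the integral over the region Γ'' = {(x₁,x₂,a) : 1−ε'' < x₂/x₁ < 1+ε'', x₁ > B''a, a > 2A} (with 0 < ε'' < 1) of the function Φ(x₁,x₂,a) = 1/(log(a⁻¹x₁²)·(a⁻¹x₁²)²) with respect to the measure a⁻¹ dx₁ dx₂ da diverges: ∫_{Γ''} Φ dρ = ∞. -/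
open Real MeasureTheory Set

noncomputable section

def Φfun (p : G) : ℝ :=
  1 / (Real.log (p.2.2⁻¹ * p.1 ^ 2) * (p.2.2⁻¹ * p.1 ^ 2) ^ 2)

lemma tsum_div_succ_top {c : ℝ} (hc : 0 < c) :
    ∑' n : ℕ, ENNReal.ofReal (c / (n + 1)) = ⊤ := by
  by_contra h
  have hs : Summable fun n : ℕ => (ENNReal.ofReal (c / (n + 1))).toReal :=
    ENNReal.summable_toReal h
  have heq : ∀ n : ℕ, (ENNReal.ofReal (c / (n + 1))).toReal = c * (1 / ((n:ℝ) + 1)) := by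
    intro n
    rw [ENNReal.toReal_ofReal (by positivity)]
    ring
  rw [funext heq] at hs
  have h2 := (summable_mul_left_iff hc.ne').mp hs
  exact mt (_root_.summable_nat_add_iff (f := fun n : ℕ ↦ 1 / (n : ℝ)) 1).mp
    not_summable_one_div_natCast (by exact_mod_cast h2)

set_option maxHeartbeats 1000000 in
/-- For any `A > 1`, `B'' > 1` and `ε'' ∈ (0,1)`, the integral of `Φ` over
`Γ'' = {(x₁,x₂,a) : 1-ε'' < x₂/x₁ < 1+ε'', x₁ > B''a, a > 2A}` with respect to
`dρ = a⁻¹ dx₁ dx₂ da` diverges. -/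
theorem Phi_integral_diverges (A B ε : ℝ) (hA : 1 < A) (hB : 1 < B) (hε0 : 0 < ε) (hε1 : ε < 1) :
    ∫⁻ p in {p : G | 1 - ε < p.2.1 / p.1 ∧ p.2.1 / p.1 < 1 + ε ∧ B * p.2.2 < p.1 ∧ 2 * A < p.2.2},
      ENNReal.ofReal (Φfun p) ∂ρG = ⊤ := by
  obtain ⟨M, hMdef⟩ : ∃ M : ℝ, M = 2 * A := ⟨_, rfl⟩
  have hM : 2 < M := by rw [hMdef]; linarith
  have hMpos : 0 < M := by linarith
  have hBpos : 0 < B := by linarith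
  have hB2 : 1 ≤ B ^ 2 := by nlinarith
  obtain ⟨T, hTdef⟩ : ∃ T : ℕ → ℝ, T = fun n => M * 2 ^ n := ⟨_, rfl⟩
  have hTn : ∀ n, T n = M * 2 ^ n := fun n => by rw [hTdef]
  have hTpos : ∀ n, 0 < T n := fun n => by rw [hTn]; positivity
  have hT2 : ∀ n, 2 < T n := by
    intro n
    have h1 : (1:ℝ) ≤ 2 ^ n := one_le_pow₀ (by norm_num)
    have := hTn n
    nlinarith
  obtain ⟨L, hLdef⟩ : ∃ L : ℕ → ℝ, L = fun n => 2 * B * T n := ⟨_, rfl⟩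
  have hLn : ∀ n, L n = 2 * B * T n := fun n => by rw [hLdef]
  have hLpos : ∀ n, 0 < L n := fun n => by rw [hLn]; have := hTpos n; positivity
  obtain ⟨K, hKdef⟩ : ∃ K : ℕ → ℝ, K = fun n => 16 * B ^ 2 * T n := ⟨_, rfl⟩
  have hKn : ∀ n, K n = 16 * B ^ 2 * T n := fun n => by rw [hKdef]
  have hK1 : ∀ n, 2 < K n := by
    intro n
    have h1 := hT2 n
    have h2 := hKn n
    nlinarith
  have hKlogpos : ∀ n, 0 < Real.log (K n) := fun n =>
    Real.log_pos (by linarith [hK1 n])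
  obtain ⟨R, hRdef⟩ : ∃ R : ℕ → Set G, R = fun n =>
      Ioo (L n) ((1 + ε) * L n) ×ˢ Ioo ((1 - ε ^ 2) * L n) ((1 + ε) * L n)
        ×ˢ Ioo (T n) (2 * T n) := ⟨_, rfl⟩
  have hRn : ∀ n, R n = Ioo (L n) ((1 + ε) * L n) ×ˢ Ioo ((1 - ε ^ 2) * L n) ((1 + ε) * L n)
      ×ˢ Ioo (T n) (2 * T n) := fun n => by rw [hRdef]
  have hRmeas : ∀ n, MeasurableSet (R n) := fun n => by
    rw [hRn]; exact measurableSet_Ioo.prod (measurableSet_Ioo.prod measurableSet_Ioo)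
  have hRmem : ∀ n (x y a : ℝ), (x, y, a) ∈ R n ↔
      (L n < x ∧ x < (1 + ε) * L n) ∧ ((1 - ε ^ 2) * L n < y ∧ y < (1 + ε) * L n) ∧
      (T n < a ∧ a < 2 * T n) := by
    intro n x y a
    rw [hRn]
    simp [Set.mem_prod, Set.mem_Ioo, and_assoc]
  set Γ : Set G := {p : G | 1 - ε < p.2.1 / p.1 ∧ p.2.1 / p.1 < 1 + ε ∧ B * p.2.2 < p.1 ∧
      2 * A < p.2.2} with hΓdef
  have hΓmeas : MeasurableSet Γ := by
    apply MeasurableSet.inter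
    · exact measurableSet_lt measurable_const (measurable_snd.fst.div measurable_fst)
    apply MeasurableSet.inter
    · exact measurableSet_lt (measurable_snd.fst.div measurable_fst) measurable_const
    apply MeasurableSet.inter
    · exact measurableSet_lt (measurable_snd.snd.const_mul B) measurable_fst
    · exact measurableSet_lt measurable_const measurable_snd.snd
  have hsub : (⋃ n, R n) ⊆ Γ := by
    rintro ⟨x, y, a⟩ hp
    simp only [mem_iUnion] at hp
    obtain ⟨n, hp⟩ := hp
    rw [hRmem] at hp
    obtain ⟨⟨hx1, hx2⟩, ⟨hy1, hy2⟩, ⟨ha1, ha2⟩⟩ := hp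
    have hxpos : 0 < x := lt_trans (hLpos n) hx1
    have hTp := hTpos n
    have hLp := hLpos n
    have hLe := hLn n
    refine ⟨?_, ?_, ?_, ?_⟩
    · show 1 - ε < y / x
      rw [lt_div_iff₀ hxpos]
      nlinarith
    · show y / x < 1 + ε
      rw [div_lt_iff₀ hxpos]
      nlinarith
    · show B * a < x
      nlinarith
    · show 2 * A < a
      have h1 : (1:ℝ) ≤ 2 ^ n := one_le_pow₀ (by norm_num)
      have := hTn n
      nlinarith
  have hdisj : Pairwise (Function.onFun Disjoint R) := by
    have key : ∀ m n, m < n → Disjoint (R m) (R n) := by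
      intro m n hmn
      rw [Set.disjoint_left]
      rintro ⟨x, y, a⟩ hpm hpn
      rw [hRmem] at hpm hpn
      have ham : a < 2 * T m := hpm.2.2.2
      have han : T n < a := hpn.2.2.1
      have h2 : 2 * T m ≤ T n := by
        have h1 : (2:ℝ) ^ (m + 1) ≤ 2 ^ n := pow_le_pow_right₀ (by norm_num) hmn
        rw [pow_succ] at h1
        have e1 := hTn m
        have e2 := hTn n
        nlinarith
      linarith
    intro m n hmn
    rcases hmn.lt_or_gt with h | h
    · exact key _ _ h
    · exact (key _ _ h).symm
  obtain ⟨d, hddef⟩ : ∃ d : G → ENNReal,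
      d = fun p => ENNReal.ofReal (if 0 < p.2.2 then p.2.2⁻¹ else 0) := ⟨_, rfl⟩
  have hdmeas : Measurable d := by
    rw [hddef]
    apply ENNReal.measurable_ofReal.comp
    exact Measurable.ite (measurableSet_lt measurable_const measurable_snd.snd)
      measurable_snd.snd.inv measurable_const
  have hΦmeas : Measurable fun p : G => ENNReal.ofReal (Φfun p) := by
    apply ENNReal.measurable_ofReal.comp
    unfold Φfun
    have h1 : Measurable fun p : G => p.2.2⁻¹ * p.1 ^ 2 :=
      measurable_snd.snd.inv.mul (measurable_fst.pow_const 2)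
    exact measurable_const.div ((Real.measurable_log.comp h1).mul (h1.pow_const 2))
  rw [ρG, MeasureTheory.restrict_withDensity hΓmeas, ← hddef,
    lintegral_withDensity_eq_lintegral_mul _ hdmeas hΦmeas]
  rw [eq_top_iff]
  obtain ⟨Lg, hLgdef⟩ : ∃ Lg : ℝ, Lg = Real.log (16 * B ^ 2 * M) := ⟨_, rfl⟩
  have hLgpos : 0 < Lg := hLgdef ▸ Real.log_pos (by nlinarith)
  obtain ⟨c, hcdef⟩ : ∃ c : ℝ, c = ε ^ 2 / (128 * B ^ 2 * Lg) := ⟨_, rfl⟩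
  have hcpos : 0 < c := by rw [hcdef]; positivity
  have hlogK : ∀ n : ℕ, Real.log (K n) ≤ ((n : ℝ) + 1) * Lg := by
    intro n
    have h2n : (0:ℝ) < 2 ^ n := by positivity
    have he : K n = (16 * B ^ 2 * M) * 2 ^ n := by rw [hKn, hTn]; ring
    rw [he, Real.log_mul (by positivity) (by positivity), Real.log_pow]
    have hlog2 : Real.log 2 ≤ Lg := by
      rw [hLgdef]
      apply Real.log_le_log (by norm_num)
      nlinarith
    have h3 : (n : ℝ) * Real.log 2 ≤ n * Lg :=
      mul_le_mul_of_nonneg_left hlog2 (Nat.cast_nonneg n)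
    rw [hLgdef] at h3 ⊢
    linarith
  have key : ∀ n : ℕ, ENNReal.ofReal (c / (n + 1)) ≤
      ∫⁻ p in R n, (d * fun p => ENNReal.ofReal (Φfun p)) p ∂volume := by
    intro n
    have hTe := hTn n
    have hKe := hKn n
    have hLe := hLn n
    have hTp := hTpos n
    have hT2' := hT2 n
    have hlgpos := hKlogpos n
    have hKpos : 0 < K n := by linarith [hK1 n]
    have hLp := hLpos n
    obtain ⟨g, hgdef⟩ : ∃ g : ℝ, g = (2 * T n)⁻¹ * (1 / (Real.log (K n) * K n ^ 2)) := ⟨_, rfl⟩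
    have hgpos : 0 < g := by rw [hgdef]; positivity
    have hpt : ∀ p ∈ R n, ENNReal.ofReal g ≤ (d * fun p => ENNReal.ofReal (Φfun p)) p := by
      rintro ⟨x, y, a⟩ hp
      rw [hRmem] at hp
      obtain ⟨⟨hx1, hx2⟩, ⟨hy1, hy2⟩, ⟨ha1, ha2⟩⟩ := hp
      have ha0 : 0 < a := by linarith
      have hx0 : 0 < x := by linarith
      obtain ⟨u, hudef⟩ : ∃ u : ℝ, u = a⁻¹ * x ^ 2 := ⟨_, rfl⟩
      have hu0 : 0 < u := by rw [hudef]; positivity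
      have hLT : 2 * T n ≤ L n := by nlinarith
      have hx4 : 4 < x := by linarith
      have hu1 : 1 < u := by
        rw [hudef, lt_inv_mul_iff₀ ha0]
        nlinarith [sq_nonneg (x - 1)]
      have huK : u ≤ K n := by
        rw [hudef, inv_mul_le_iff₀ ha0]
        have hxU2 : x < 4 * B * T n := by nlinarith
        have hxsq : x ^ 2 < (4 * B * T n) ^ 2 := by
          apply pow_lt_pow_left₀ hxU2 (le_of_lt hx0)
          norm_num
        have hKT : K n * T n = (4 * B * T n) ^ 2 := by rw [hKe]; ring
        nlinarith [mul_le_mul_of_nonneg_left (le_of_lt ha1) (le_of_lt hKpos)]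
      have hlogu : 0 < Real.log u := Real.log_pos hu1
      have hloguK : Real.log u ≤ Real.log (K n) := Real.log_le_log hu0 huK
      have hΦeq : Φfun (x, y, a) = 1 / (Real.log u * u ^ 2) := by
        rw [Φfun, hudef]
      have hΦ : 1 / (Real.log (K n) * K n ^ 2) ≤ Φfun (x, y, a) := by
        rw [hΦeq]
        apply one_div_le_one_div_of_le (by positivity)
        have hu2 : u ^ 2 ≤ K n ^ 2 := by nlinarith
        exact mul_le_mul hloguK hu2 (by positivity) (le_of_lt hlgpos)
      have hainv : (2 * T n)⁻¹ ≤ a⁻¹ := inv_anti₀ ha0 (le_of_lt ha2)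
      have hd : d (x, y, a) = ENNReal.ofReal a⁻¹ := by
        rw [hddef]; simp only [if_pos ha0]
      show ENNReal.ofReal g ≤ d (x, y, a) * ENNReal.ofReal (Φfun (x, y, a))
      rw [hd, ← ENNReal.ofReal_mul (by positivity)]
      apply ENNReal.ofReal_le_ofReal
      rw [hgdef]
      have hΦpos : 0 < 1 / (Real.log (K n) * K n ^ 2) := by positivity
      apply mul_le_mul hainv hΦ (le_of_lt hΦpos) (by positivity)
    have hvol : volume (R n) = ENNReal.ofReal (ε * L n) *
        (ENNReal.ofReal ((ε + ε ^ 2) * L n) * ENNReal.ofReal (T n)) := by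
      rw [hRn, MeasureTheory.Measure.volume_eq_prod, MeasureTheory.Measure.prod_prod,
        MeasureTheory.Measure.volume_eq_prod, MeasureTheory.Measure.prod_prod,
        Real.volume_Ioo, Real.volume_Ioo, Real.volume_Ioo,
        show (1 + ε) * L n - L n = ε * L n by ring,
        show (1 + ε) * L n - (1 - ε ^ 2) * L n = (ε + ε ^ 2) * L n by ring,
        show 2 * T n - T n = T n by ring]
    calc ENNReal.ofReal (c / (n + 1))
        ≤ ENNReal.ofReal (g * (ε * L n * ((ε + ε ^ 2) * L n * T n))) := by
          apply ENNReal.ofReal_le_ofReal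
          have hgP : g * (ε * L n * ((ε + ε ^ 2) * L n * T n)) =
              ε * (ε + ε ^ 2) / (128 * B ^ 2 * Real.log (K n)) := by
            rw [hgdef, hKe, hLe]
            have hTne : T n ≠ 0 := ne_of_gt hTp
            have hBne : B ≠ 0 := ne_of_gt hBpos
            have hlgne : Real.log (16 * B ^ 2 * T n) ≠ 0 := by
              rw [← hKe]; exact ne_of_gt hlgpos
            field_simp
            ring
          rw [hgP]
          have hc1 : c / ((n : ℝ) + 1) = ε ^ 2 / (128 * B ^ 2 * Lg * ((n : ℝ) + 1)) := by
            rw [hcdef, div_div]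
          rw [hc1]
          apply div_le_div₀ (by positivity) (by nlinarith) (by positivity)
          have h4 := hlogK n
          calc 128 * B ^ 2 * Real.log (K n) ≤ 128 * B ^ 2 * (((n:ℝ) + 1) * Lg) := by
                apply mul_le_mul_of_nonneg_left h4 (by positivity)
            _ = 128 * B ^ 2 * Lg * ((n:ℝ) + 1) := by ring
      _ = ENNReal.ofReal g * volume (R n) := by
          rw [hvol, ← ENNReal.ofReal_mul (by positivity : (0:ℝ) ≤ (ε + ε ^ 2) * L n),
            ← ENNReal.ofReal_mul (by positivity : (0:ℝ) ≤ ε * L n),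
            ← ENNReal.ofReal_mul (le_of_lt hgpos)]
      _ = ∫⁻ _ in R n, ENNReal.ofReal g ∂volume := (setLIntegral_const (R n) _).symm
      _ ≤ ∫⁻ p in R n, (d * fun p => ENNReal.ofReal (Φfun p)) p ∂volume :=
          setLIntegral_mono' (hRmeas n) hpt
  calc (⊤ : ENNReal) = ∑' n : ℕ, ENNReal.ofReal (c / (n + 1)) := (tsum_div_succ_top hcpos).symm
  _ ≤ ∑' n : ℕ, ∫⁻ p in R n, (d * fun p => ENNReal.ofReal (Φfun p)) p ∂volume :=
      ENNReal.tsum_le_tsum key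
  _ = ∫⁻ p in ⋃ n, R n, (d * fun p => ENNReal.ofReal (Φfun p)) p ∂volume :=
      (lintegral_iUnion hRmeas hdisj _).symm
  _ ≤ ∫⁻ p in Γ, (d * fun p => ENNReal.ofReal (Φfun p)) p ∂volume :=
      lintegral_mono_set hsub
end
end
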